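/- Let γ, N : ℝ → ℝ³ be differentiable and v : ℝ³ → ℝ be continuously differentiable with ‖Dv(x)‖ ≤ C for all x, where C ≥ 0. Assume ‖γ(s)‖ = 1, ‖N(s)‖ = 1, ⟨γ(s), N(s)⟩ = 0 and ⟨γ'(s), N(s)⟩ = 0 for all s. Define Φ(r,s) = r·γ(s) + v(r·γ(s))·N(s). Then for all r > 0 and all s, the partial derivatives ∂Φ/∂r and ∂Φ/∂s exist and satisfy |⟨∂Φ/∂r(r,s), ∂Φ/∂s(r,s)⟩| ≤ C² · r · ‖γ'(s)‖. -/

import Mathlib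

open scoped RealInnerProductSpace

/-- Off-diagonal metric bound for the conical-end parametrization
`Φ(r,s) = r·γ(s) + v(r·γ(s))·N(s)`: if `γ`, `N` are differentiable unit vector fields
with `⟨γ,N⟩ = 0` and `⟨γ',N⟩ = 0`, and `v` is C¹ with `‖Dv‖ ≤ C`, then for `r > 0`
the partial derivatives `∂Φ/∂r`, `∂Φ/∂s` exist and
`|⟨∂Φ/∂r, ∂Φ/∂s⟩| ≤ C² · r · ‖γ'(s)‖`. -/
theorem conical_end_offdiagonal_metric_bound (C : ℝ) (hC : 0 ≤ C)
    (γ N γ' N' : ℝ → EuclideanSpace ℝ (Fin 3))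
    (hγd : ∀ s, HasDerivAt γ (γ' s) s) (hNd : ∀ s, HasDerivAt N (N' s) s)
    (v : EuclideanSpace ℝ (Fin 3) → ℝ)
    (hv : ContDiff ℝ 1 v) (hDv : ∀ x, ‖fderiv ℝ v x‖ ≤ C)
    (hγ : ∀ s, ‖γ s‖ = 1) (hN : ∀ s, ‖N s‖ = 1)
    (hγN : ∀ s, ⟪γ s, N s⟫ = 0) (hγ'N : ∀ s, ⟪γ' s, N s⟫ = 0)
    (Φ : ℝ → ℝ → EuclideanSpace ℝ (Fin 3))
    (hΦ : ∀ r s, Φ r s = r • γ s + v (r • γ s) • N s) :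
    ∀ r, 0 < r → ∀ s, ∃ Dr Ds : EuclideanSpace ℝ (Fin 3),
      HasDerivAt (fun r' => Φ r' s) Dr r ∧
      HasDerivAt (fun s' => Φ r s') Ds s ∧
      |⟪Dr, Ds⟫| ≤ C ^ 2 * r * ‖γ' s‖ := by
  intro r hr s
  have hvd : ∀ y, HasFDerivAt v (fderiv ℝ v y) y := fun y =>
    (hv.differentiable one_ne_zero y).hasFDerivAt
  set x : EuclideanSpace ℝ (Fin 3) := r • γ s with hx
  set L : EuclideanSpace ℝ (Fin 3) →L[ℝ] ℝ := fderiv ℝ v x with hLdef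
  -- derivative in r
  have h1 : HasDerivAt (fun r' : ℝ => r' • γ s) (γ s) r := by
    simpa using (hasDerivAt_id r).smul_const (γ s)
  have hvr : HasDerivAt (fun r' : ℝ => v (r' • γ s)) (L (γ s)) r :=
    (hvd x).comp_hasDerivAt r h1
  have hDr : HasDerivAt (fun r' => Φ r' s) (γ s + L (γ s) • N s) r := by
    have : (fun r' => Φ r' s) = fun r' => r' • γ s + v (r' • γ s) • N s :=
      funext fun r' => hΦ r' s
    rw [this]
    exact h1.add (hvr.smul_const (N s))
  -- derivative in s
  have h2 : HasDerivAt (fun s' : ℝ => r • γ s') (r • γ' s) s := (hγd s).const_smul r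
  have hvs : HasDerivAt (fun s' : ℝ => v (r • γ s')) (L (r • γ' s)) s :=
    (hvd x).comp_hasDerivAt s h2
  have hDs : HasDerivAt (fun s' => Φ r s')
      (r • γ' s + (v x • N' s + L (r • γ' s) • N s)) s := by
    have : (fun s' => Φ r s') = fun s' => r • γ s' + v (r • γ s') • N s' :=
      funext fun s' => hΦ r s'
    rw [this]
    exact h2.add (hvs.smul (hNd s))
  -- orthogonality facts
  have key : ∀ (f g f' g' : ℝ → EuclideanSpace ℝ (Fin 3)),
      (∀ t, HasDerivAt f (f' t) t) → (∀ t, HasDerivAt g (g' t) t) →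
      (∀ t, ⟪f t, g t⟫ = ⟪f s, g s⟫) → ⟪f s, g' s⟫ + ⟪f' s, g s⟫ = 0 := by
    intro f g f' g' hf hg hconst
    have hd : HasDerivAt (fun t => ⟪f t, g t⟫) (⟪f s, g' s⟫ + ⟪f' s, g s⟫) s :=
      (hf s).inner ℝ (hg s)
    have : (fun t => ⟪f t, g t⟫) = fun _ => ⟪f s, g s⟫ := funext hconst
    rw [this] at hd
    exact hd.unique (hasDerivAt_const s _)
  have hγγ' : ⟪γ s, γ' s⟫ = 0 := by
    have h := key γ γ γ' γ' hγd hγd (fun t => by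
      rw [real_inner_self_eq_norm_sq, real_inner_self_eq_norm_sq, hγ t, hγ s])
    have hc : ⟪γ' s, γ s⟫ = ⟪γ s, γ' s⟫ := real_inner_comm _ _
    linarith [h, hc]
  have hNN' : ⟪N s, N' s⟫ = 0 := by
    have h := key N N N' N' hNd hNd (fun t => by
      rw [real_inner_self_eq_norm_sq, real_inner_self_eq_norm_sq, hN t, hN s])
    have hc : ⟪N' s, N s⟫ = ⟪N s, N' s⟫ := real_inner_comm _ _
    linarith [h, hc]
  have hγN' : ⟪γ s, N' s⟫ = 0 := by
    have h := key γ N γ' N' hγd hNd (fun t => by rw [hγN, hγN])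
    have := hγ'N s
    linarith [h]
  have hNγ' : ⟪N s, γ' s⟫ = 0 := by rw [real_inner_comm]; exact hγ'N s
  have hNN : ⟪N s, N s⟫ = (1:ℝ) := by
    rw [real_inner_self_eq_norm_sq, hN]; norm_num
  refine ⟨_, _, hDr, hDs, ?_⟩
  have hinner : ⟪γ s + L (γ s) • N s, r • γ' s + (v x • N' s + L (r • γ' s) • N s)⟫
      = L (γ s) * (r * L (γ' s)) := by
    rw [map_smul]
    simp only [inner_add_left, inner_add_right, real_inner_smul_left,
      real_inner_smul_right, hγγ', hγN s, hγN', hNγ', hNN, hNN', smul_eq_mul]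
    ring
  rw [hinner]
  have hLγ : |L (γ s)| ≤ C := by
    calc |L (γ s)| = ‖L (γ s)‖ := (Real.norm_eq_abs _).symm
      _ ≤ ‖L‖ * ‖γ s‖ := L.le_opNorm _
      _ ≤ C * 1 := by rw [hγ]; exact mul_le_mul_of_nonneg_right (hDv x) zero_le_one
      _ = C := mul_one C
  have hLγ' : |L (γ' s)| ≤ C * ‖γ' s‖ := by
    calc |L (γ' s)| = ‖L (γ' s)‖ := (Real.norm_eq_abs _).symm
      _ ≤ ‖L‖ * ‖γ' s‖ := L.le_opNorm _
      _ ≤ C * ‖γ' s‖ := mul_le_mul_of_nonneg_right (hDv x) (norm_nonneg _)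
  calc |L (γ s) * (r * L (γ' s))| = |L (γ s)| * (r * |L (γ' s)|) := by
        rw [abs_mul, abs_mul, abs_of_pos hr]
    _ ≤ C * (r * (C * ‖γ' s‖)) := by
        apply mul_le_mul hLγ _ (by positivity) hC
        exact mul_le_mul_of_nonneg_left hLγ' hr.le
    _ = C ^ 2 * r * ‖γ' s‖ := by ring
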